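/- Fix N > 0 and a real m with 0 < m < N. For (μ1, μ0) ∈ (0,1)², let τ := μ1 − μ0, v := μ1(1−μ1) + μ0(1−μ0), t := √m·|τ|/√(2v), and define the Bernoulli normal-approximation marginal ratio η^NA(m, μ1, μ0) := 2Φ(−t) + ((N − m)/m)·t·φ(t). Then sup_{(μ1, μ0) ∈ (0,1)²} η^NA(m, μ1, μ0) ≤ 1 if and only if m ≥ N/3. -/

import Mathlib

/-- The standard normal density `φ`. -/
noncomputable def stdGaussPDF (x : ℝ) : ℝ :=
  (Real.sqrt (2 * Real.pi))⁻¹ * Real.exp (-x ^ 2 / 2)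

/-- The standard normal distribution function `Φ`. -/
noncomputable def stdGaussCDF (t : ℝ) : ℝ :=
  ∫ x in Set.Iic t, stdGaussPDF x

/-- The Gaussian limit function `f_k(t) = 2Φ(−t) + k t φ(t)`. -/
noncomputable def fG (k t : ℝ) : ℝ :=
  2 * stdGaussCDF (-t) + k * t * stdGaussPDF t

/-- The Bernoulli normal-approximation marginal ratio
`η^NA(m, μ1, μ0) = 2Φ(−t) + ((N − m)/m) t φ(t)` with
`t = √m |μ1 − μ0| / √(2(μ1(1−μ1) + μ0(1−μ0)))`. -/
noncomputable def etaNA (N m μ1 μ0 : ℝ) : ℝ :=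
  fG ((N - m) / m)
    (Real.sqrt m * |μ1 - μ0| / Real.sqrt (2 * (μ1 * (1 - μ1) + μ0 * (1 - μ0))))

open MeasureTheory Set Real

lemma pdf_alt : stdGaussPDF = fun x => (Real.sqrt (2 * Real.pi))⁻¹ * Real.exp (-(1/2) * x ^ 2) := by
  funext x; unfold stdGaussPDF; ring_nf

lemma pdf_cont : Continuous stdGaussPDF := by
  unfold stdGaussPDF; fun_prop

lemma pdf_pos (x : ℝ) : 0 < stdGaussPDF x :=
  mul_pos (inv_pos.2 (Real.sqrt_pos.2 (by positivity))) (Real.exp_pos _)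

lemma pdf_integrable : Integrable stdGaussPDF := by
  rw [pdf_alt]
  exact (integrable_exp_neg_mul_sq (by norm_num : (0:ℝ) < 1/2)).const_mul _

lemma pdf_even (x : ℝ) : stdGaussPDF (-x) = stdGaussPDF x := by
  unfold stdGaussPDF; ring_nf

lemma pdf_total : ∫ x, stdGaussPDF x = 1 := by
  rw [pdf_alt, MeasureTheory.integral_const_mul, integral_gaussian]
  rw [show (Real.pi / (1/2)) = 2 * Real.pi by ring]
  rw [inv_mul_cancel₀ (by positivity)]

lemma cdf_zero : stdGaussCDF 0 = 1/2 := by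
  have h1 : stdGaussCDF 0 + ∫ x in Ioi (0:ℝ), stdGaussPDF x = 1 := by
    rw [← pdf_total]
    exact intervalIntegral.integral_Iic_add_Ioi pdf_integrable.integrableOn
      pdf_integrable.integrableOn
  have h2 : ∫ x in Ioi (0:ℝ), stdGaussPDF x = stdGaussCDF 0 := by
    have h := integral_comp_neg_Iic (0:ℝ) stdGaussPDF
    simp only [neg_zero] at h
    rw [← h, stdGaussCDF]
    exact setIntegral_congr_fun measurableSet_Iic fun x _ => pdf_even x
  linarith

lemma cdf_neg (t : ℝ) :
    stdGaussCDF (-t) = 1/2 - ∫ x in (0:ℝ)..t, stdGaussPDF x := by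
  have h := intervalIntegral.integral_Iic_sub_Iic (a := -t) (b := (0:ℝ)) (μ := volume)
    pdf_integrable.integrableOn pdf_integrable.integrableOn
  have h2 : (∫ x in (-t)..(0:ℝ), stdGaussPDF x) = ∫ x in (0:ℝ)..t, stdGaussPDF x := by
    have h3 := intervalIntegral.integral_comp_neg (a := (0:ℝ)) (b := t) (f := stdGaussPDF)
    simp only [neg_zero] at h3
    rw [← h3]
    exact intervalIntegral.integral_congr fun x _ => pdf_even x
  rw [h2] at h
  have h0 := cdf_zero
  unfold stdGaussCDF at h0 ⊢
  linarith

lemma fG_eq (k t : ℝ) :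
    fG k t = 1 - (2 * (∫ x in (0:ℝ)..t, stdGaussPDF x) - k * t * stdGaussPDF t) := by
  rw [fG, cdf_neg]; ring

lemma hasDerivAt_pdf (t : ℝ) : HasDerivAt stdGaussPDF (-t * stdGaussPDF t) t := by
  have h : HasDerivAt (fun x : ℝ => -x ^ 2 / 2) (-t) t := by
    have := ((hasDerivAt_pow 2 t).neg).div_const 2
    refine this.congr_deriv ?_
    norm_num; ring
  have h2 := (h.exp).const_mul (Real.sqrt (2 * Real.pi))⁻¹
  refine h2.congr_deriv ?_
  unfold stdGaussPDF
  ring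

lemma hasDerivAt_Fk (k t : ℝ) :
    HasDerivAt (fun u => 2 * (∫ x in (0:ℝ)..u, stdGaussPDF x) - k * u * stdGaussPDF u)
      (stdGaussPDF t * (2 - k + k * t ^ 2)) t := by
  have h1 : HasDerivAt (fun u => ∫ x in (0:ℝ)..u, stdGaussPDF x) (stdGaussPDF t) t :=
    intervalIntegral.integral_hasDerivAt_right (pdf_cont.intervalIntegrable _ _)
      (pdf_cont.stronglyMeasurableAtFilter _ _) pdf_cont.continuousAt
  have h2 : HasDerivAt (fun u : ℝ => k * u * stdGaussPDF u)
      (k * 1 * stdGaussPDF t + k * t * (-t * stdGaussPDF t)) t :=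
    (((hasDerivAt_id t).const_mul k).mul (hasDerivAt_pdf t))
  have := (h1.const_mul 2).sub h2
  refine this.congr_deriv ?_
  ring

lemma Fk_nonneg {k : ℝ} (hk0 : 0 ≤ k) (hk2 : k ≤ 2) {t : ℝ} (ht : 0 ≤ t) :
    0 ≤ 2 * (∫ x in (0:ℝ)..t, stdGaussPDF x) - k * t * stdGaussPDF t := by
  set F : ℝ → ℝ := fun u => 2 * (∫ x in (0:ℝ)..u, stdGaussPDF x) - k * u * stdGaussPDF u with hF
  have key : MonotoneOn F (Ici 0) := by
    apply monotoneOn_of_deriv_nonneg (convex_Ici 0)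
    · exact fun x _ => (hasDerivAt_Fk k x).continuousAt.continuousWithinAt
    · exact fun x _ => (hasDerivAt_Fk k x).differentiableAt.differentiableWithinAt
    · intro x _
      rw [(hasDerivAt_Fk k x).deriv]
      have h1 := pdf_pos x
      nlinarith [sq_nonneg x, mul_nonneg hk0 (sq_nonneg x)]
  have h0 : F 0 = 0 := by simp [hF]
  have := key self_mem_Ici (mem_Ici.2 ht) ht
  rw [h0] at this
  exact this

lemma Fk_neg {k : ℝ} (hk2 : 2 < k) {t : ℝ} (ht : 0 < t) (ht2 : k * t ^ 2 < k - 2) :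
    2 * (∫ x in (0:ℝ)..t, stdGaussPDF x) - k * t * stdGaussPDF t < 0 := by
  set F : ℝ → ℝ := fun u => 2 * (∫ x in (0:ℝ)..u, stdGaussPDF x) - k * u * stdGaussPDF u with hF
  have key : StrictAntiOn F (Icc 0 t) := by
    apply strictAntiOn_of_deriv_neg (convex_Icc 0 t)
    · exact fun x _ => (hasDerivAt_Fk k x).continuousAt.continuousWithinAt
    · intro x hx
      rw [interior_Icc] at hx
      rw [(hasDerivAt_Fk k x).deriv]
      apply mul_neg_of_pos_of_neg (pdf_pos x)
      have hx2 : x ^ 2 < t ^ 2 := sq_lt_sq' (by linarith [hx.1, ht]) hx.2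
      nlinarith [mul_lt_mul_of_pos_left hx2 (by linarith : (0:ℝ) < k)]
  have h0 : F 0 = 0 := by simp [hF]
  have := key (left_mem_Icc.2 ht.le) (right_mem_Icc.2 ht.le) ht
  rw [h0] at this
  exact this

/-- Rule of thirds under the Bernoulli normal approximation:
`sup_{(μ1,μ0) ∈ (0,1)²} η^NA(m, μ1, μ0) ≤ 1` if and only if `m ≥ N/3`. -/
theorem rule_of_thirds_normal_approx (N m : ℝ) (hN : 0 < N) (hm : 0 < m)
    (hmN : m < N) :
    (∀ μ1 ∈ Set.Ioo (0 : ℝ) 1, ∀ μ0 ∈ Set.Ioo (0 : ℝ) 1, etaNA N m μ1 μ0 ≤ 1)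
      ↔ N / 3 ≤ m := by
  constructor
  · intro H
    by_contra hlt
    push_neg at hlt
    have hk2 : 2 < (N - m) / m := by
      rw [lt_div_iff₀ hm]; linarith
    set k : ℝ := (N - m) / m with hk
    have hεaux : (0:ℝ) < (k - 2) / (4 * k * m) := by
      apply div_pos (by linarith) (by nlinarith)
    set ε : ℝ := min (1/4) (Real.sqrt ((k - 2) / (4 * k * m))) with hε
    have hεpos : 0 < ε := lt_min (by norm_num) (Real.sqrt_pos.2 hεaux)
    have hε4 : ε ≤ 1/4 := min_le_left _ _
    have hεsq : ε ^ 2 ≤ (k - 2) / (4 * k * m) := by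
      have h1 : ε ≤ Real.sqrt ((k - 2) / (4 * k * m)) := min_le_right _ _
      calc ε ^ 2 ≤ (Real.sqrt ((k - 2) / (4 * k * m))) ^ 2 := by nlinarith [hεpos]
        _ = (k - 2) / (4 * k * m) := Real.sq_sqrt hεaux.le
    have hμ1 : (1/2 + ε) ∈ Set.Ioo (0:ℝ) 1 := ⟨by linarith, by linarith⟩
    have hμ0 : (1/2 : ℝ) ∈ Set.Ioo (0:ℝ) 1 := ⟨by norm_num, by norm_num⟩
    have H1 := H _ hμ1 _ hμ0
    have hden : (0:ℝ) < 1 - 2 * ε ^ 2 := by nlinarith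
    set t : ℝ := Real.sqrt m * ε / Real.sqrt (1 - 2 * ε ^ 2) with htdef
    have htpos : 0 < t :=
      div_pos (mul_pos (Real.sqrt_pos.2 hm) hεpos) (Real.sqrt_pos.2 hden)
    have htsq : t ^ 2 = m * ε ^ 2 / (1 - 2 * ε ^ 2) := by
      rw [htdef, div_pow, mul_pow, Real.sq_sqrt hm.le, Real.sq_sqrt hden.le]
    have harg : etaNA N m (1/2 + ε) (1/2) = fG k t := by
      rw [etaNA, ← hk, htdef,
        show (1/2 + ε - 1/2 : ℝ) = ε by ring, abs_of_pos hεpos,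
        show (2 * ((1/2 + ε) * (1 - (1/2 + ε)) + 1/2 * (1 - 1/2)) : ℝ) = 1 - 2 * ε ^ 2 by ring]
    have hkt2 : k * t ^ 2 < k - 2 := by
      rw [htsq, mul_div_assoc', div_lt_iff₀ hden]
      have h4 : ε ^ 2 * (4 * k * m) ≤ k - 2 := (le_div_iff₀ (by nlinarith)).mp hεsq
      have h16 : ε ^ 2 ≤ 1/16 := by nlinarith
      have h5 : (k - 2) * ε ^ 2 ≤ (k - 2) * (1/16) :=
        mul_le_mul_of_nonneg_left h16 (by linarith)
      nlinarith
    have hFneg := Fk_neg hk2 htpos hkt2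
    rw [harg, fG_eq] at H1
    linarith
  · intro hNm μ1 _ μ0 _
    have hk0 : 0 ≤ (N - m) / m := div_nonneg (by linarith) hm.le
    have hk2 : (N - m) / m ≤ 2 := by
      rw [div_le_iff₀ hm]; linarith
    have ht : 0 ≤ Real.sqrt m * |μ1 - μ0| /
        Real.sqrt (2 * (μ1 * (1 - μ1) + μ0 * (1 - μ0))) :=
      div_nonneg (mul_nonneg (Real.sqrt_nonneg _) (abs_nonneg _)) (Real.sqrt_nonneg _)
    have hF := Fk_nonneg hk0 hk2 ht
    rw [etaNA, fG_eq]
    linarith
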